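/- For the m-dilated simple increment filter a = {-1,1}^m (length m+1), and H ∈ (0,1/2), the ℓ¹-norm of its correlation function is 1 + ∑_{j=1}^{m-1} |(j+m)^{2H} - 2j^{2H} + |j-m|^{2H}|/m^{2H} + (S_{2m-1}^H - 2S_{m-1}^H)/m^{2H}, where S_k^H = ∑_{j=0}^k j^{2H}. In particular, as H → (1/2)⁻ this quantity tends to 2m, while at H = 1/2 the ℓ¹-norm equals m; hence H ↦ ‖ρ_H^{(i1)^m}‖_{ℓ¹(ℤ)} is discontinuous at H = 1/2 for m ≥ 2. -/

import Mathlib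

open Finset Real Filter


lemma aux_concave {a : ℝ} (ha0 : 0 ≤ a) (ha1 : a ≤ 1) {x y : ℝ} (hx : 0 ≤ x) (hy : 0 ≤ y) :
    x ^ a + y ^ a ≤ 2 * (((x + y) / 2) ^ a) := by
  have h := (Real.concaveOn_rpow ha0 ha1).2 (Set.mem_Ici.2 hx) (Set.mem_Ici.2 hy)
      (by norm_num : (0:ℝ) ≤ 1/2) (by norm_num : (0:ℝ) ≤ 1/2) (by norm_num)
  simp only [smul_eq_mul] at h
  have e : (1/2 : ℝ) * x + (1/2 : ℝ) * y = (x + y) / 2 := by ring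
  rw [e] at h
  linarith

lemma aux_bernoulli {a : ℝ} (ha0 : 0 < a) (ha1 : a ≤ 1) {x c : ℝ} (hx : 1 ≤ x) (hc : 0 ≤ c) :
    (x + c) ^ a - x ^ a ≤ c * x ^ (a - 1) := by
  have hx0 : 0 < x := lt_of_lt_of_le one_pos hx
  have h1 : (x + c) ^ a = x ^ a * (1 + c / x) ^ a := by
    rw [← Real.mul_rpow hx0.le (by positivity)]
    congr 1
    field_simp
  have h2 : (1 + c / x) ^ a ≤ 1 + a * (c / x) :=
    rpow_one_add_le_one_add_mul_self (by
      have : 0 ≤ c / x := div_nonneg hc hx0.le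
      linarith) ha0.le ha1
  have h3 : x ^ (a - 1) = x ^ a / x := by
    rw [Real.rpow_sub hx0, Real.rpow_one]
  have hxa : 0 ≤ x ^ a := Real.rpow_nonneg hx0.le a
  have h4 : (x + c) ^ a ≤ x ^ a + a * c * (x ^ a / x) := by
    calc (x + c) ^ a = x ^ a * (1 + c / x) ^ a := h1
    _ ≤ x ^ a * (1 + a * (c / x)) := by nlinarith
    _ = x ^ a + a * c * (x ^ a / x) := by field_simp
  have hq : 0 ≤ x ^ a / x := by positivity
  have h5 : a * c * (x ^ a / x) ≤ c * (x ^ a / x) := by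
    nlinarith [mul_nonneg (mul_nonneg hc hq) (by linarith : (0:ℝ) ≤ 1 - a)]
  rw [h3]
  linarith

lemma sum_Icc_one_eq (m : ℕ) (hm : 1 ≤ m) (f : ℕ → ℝ) :
    ∑ j ∈ Finset.Icc 1 (m - 1), f j = (∑ j ∈ Finset.range m, f j) - f 0 := by
  have h1 : Finset.Icc 1 (m - 1) = Finset.Ico 1 m := by
    rw [← Finset.Ico_add_one_right_eq_Icc]; congr 1; omega
  rw [h1]
  have h2 := Finset.sum_Ico_consecutive f (by omega : 0 ≤ 1) (by omega : 1 ≤ m)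
  rw [Nat.Ico_zero_eq_range, Nat.Ico_zero_eq_range] at h2
  rw [Finset.sum_range_one] at h2
  linarith

lemma aux_gauss (m : ℕ) : ∑ i ∈ Finset.range m, (i : ℝ) = m * (m - 1) / 2 := by
  induction m with
  | zero => simp
  | succ n ih => rw [Finset.sum_range_succ, ih]; push_cast; ring

lemma cont_rpow (b : ℝ) (hb : 0 < b) : Continuous fun H : ℝ => b ^ (2 * H) := by
  have : (fun H : ℝ => b ^ (2 * H)) = fun H : ℝ => Real.exp (Real.log b * (2 * H)) := by
    funext H; rw [Real.rpow_def_of_pos hb]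
  rw [this]
  exact Real.continuous_exp.comp (by continuity)

lemma tendsto_pow_term {x : ℝ} (hx : 0 ≤ x) :
    Tendsto (fun H : ℝ => x ^ (2 * H)) (nhds (1/2)) (nhds x) := by
  rcases eq_or_lt_of_le hx with rfl | h
  · have hev : (fun H : ℝ => (0:ℝ) ^ (2 * H)) =ᶠ[nhds (1/2 : ℝ)] (fun _ => (0:ℝ)) := by
      filter_upwards [eventually_ne_nhds (by norm_num : (1/2:ℝ) ≠ 0)] with H hH
      rw [Real.zero_rpow (by simpa using hH)]
    exact Tendsto.congr' hev.symm tendsto_const_nhds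
  · have := ((cont_rpow x h).tendsto (1/2 : ℝ))
    simpa [show (2:ℝ) * (1/2 : ℝ) = 1 by norm_num, Real.rpow_one] using this

noncomputable def fval (m : ℕ) (H : ℝ) (j : ℤ) : ℝ :=
  |(1 / 2) * (|(j : ℝ) + (m : ℝ)| ^ (2 * H) - 2 * |(j : ℝ)| ^ (2 * H)
      + |(j : ℝ) - (m : ℝ)| ^ (2 * H)) / (m : ℝ) ^ (2 * H)|

lemma fval_symm (m : ℕ) (H : ℝ) (j : ℤ) : fval m H (-j) = fval m H j := by
  unfold fval
  push_cast
  rw [show -(j:ℝ) + m = -((j:ℝ) - m) by ring, show -(j:ℝ) - m = -((j:ℝ) + m) by ring,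
    abs_neg ((j:ℝ) - m), abs_neg ((j:ℝ) + m), abs_neg (j:ℝ)]
  ring_nf

lemma fval_nat (m : ℕ) (H : ℝ) (hm : 1 ≤ m) (n : ℕ) :
    fval m H n = 1 / 2 * |((n:ℝ) + m) ^ (2*H) - 2 * (n:ℝ) ^ (2*H) + |(n:ℝ) - m| ^ (2*H)|
      / (m:ℝ) ^ (2*H) := by
  have hmR : (0:ℝ) < m := by exact_mod_cast hm
  have hma : (0:ℝ) < (m:ℝ) ^ (2*H) := Real.rpow_pos_of_pos hmR _
  unfold fval
  push_cast
  rw [abs_of_nonneg (by positivity : (0:ℝ) ≤ (n:ℝ) + m), abs_of_nonneg (show (0:ℝ) ≤ (n:ℝ) from n.cast_nonneg),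
    abs_div, abs_mul, abs_of_nonneg (by norm_num : (0:ℝ) ≤ (1:ℝ)/2), abs_of_nonneg hma.le]

lemma key (m : ℕ) (hm : 2 ≤ m) {H : ℝ} (h0 : 0 < H) (h1 : H < 1/2) :
    HasSum (fval m H)
      (1 + (∑ j ∈ Finset.Icc 1 (m - 1),
              |((j : ℝ) + (m : ℝ)) ^ (2 * H) - 2 * (j : ℝ) ^ (2 * H)
                + |(j : ℝ) - (m : ℝ)| ^ (2 * H)|) / (m : ℝ) ^ (2 * H)
          + ((∑ j ∈ Finset.range (2 * m), (j : ℝ) ^ (2 * H))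
              - 2 * ∑ j ∈ Finset.range m, (j : ℝ) ^ (2 * H)) / (m : ℝ) ^ (2 * H)) := by
  have ha0 : 0 < 2 * H := by linarith
  have ha1 : 2 * H < 1 := by linarith
  have hmR : (0:ℝ) < m := by exact_mod_cast (by omega : 0 < m)
  have hma : (0:ℝ) < (m:ℝ) ^ (2*H) := Real.rpow_pos_of_pos hmR _
  set a := 2 * H with ha
  -- the tail sequence
  set t : ℕ → ℝ := fun k => 2 * ((k:ℝ) + m) ^ a - ((k:ℝ) + 2*m) ^ a - (k:ℝ) ^ a with ht
  have ht_nonneg : ∀ k, 0 ≤ t k := by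
    intro k
    have h := aux_concave ha0.le ha1.le k.cast_nonneg
      (by positivity : (0:ℝ) ≤ (k:ℝ) + 2*m)
    rw [show ((k:ℝ) + ((k:ℝ) + 2*m))/2 = (k:ℝ) + m by ring] at h
    simp only [ht]; linarith
  set R : ℕ → ℝ := fun K => ∑ j ∈ Finset.range K, (j:ℝ) ^ a with hR
  set D : ℝ := R (2*m) - 2 * R m with hD
  have hshift : ∀ (c N : ℕ), ∑ k ∈ Finset.range N, ((k:ℝ) + (c:ℝ)) ^ a = R (c + N) - R c := by
    intro c N
    have h := Finset.sum_range_add (fun j : ℕ => (j:ℝ) ^ a) c N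
    have h2 : ∑ x ∈ Finset.range N, ((c + x : ℕ):ℝ) ^ a
        = ∑ k ∈ Finset.range N, ((k:ℝ) + (c:ℝ)) ^ a := by
      refine Finset.sum_congr rfl fun i _ => ?_
      push_cast
      rw [add_comm (c:ℝ) (i:ℝ)]
    simp only [hR]
    rw [h, h2]
    ring
  -- partial sums of t
  set E : ℕ → ℝ := fun N => ∑ j ∈ Finset.range m,
      (((N + j : ℕ):ℝ) ^ a - ((N + m + j : ℕ):ℝ) ^ a) with hE
  have hPS : ∀ N, ∑ k ∈ Finset.range N, t k = D + E N := by
    intro N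
    have l1 : ∑ k ∈ Finset.range N, t k
        = 2 * ∑ k ∈ Finset.range N, ((k:ℝ) + (m:ℝ)) ^ a
          - ∑ k ∈ Finset.range N, ((k:ℝ) + ((2*m : ℕ):ℝ)) ^ a
          - ∑ k ∈ Finset.range N, (k:ℝ) ^ a := by
      rw [Finset.mul_sum, ← Finset.sum_sub_distrib, ← Finset.sum_sub_distrib]
      refine Finset.sum_congr rfl fun k _ => ?_
      simp only [ht]; push_cast; ring
    have l2 := hshift m N
    have l3 := hshift (2*m) N
    have l4 : E N = (R (N + m) - R N) - (R (N + m + m) - R (N + m)) := by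
      have e1 := Finset.sum_range_add (fun j : ℕ => (j:ℝ) ^ a) N m
      have e2 := Finset.sum_range_add (fun j : ℕ => (j:ℝ) ^ a) (N + m) m
      simp only [hE, Finset.sum_sub_distrib]
      simp only [hR] at *
      rw [e1] at *
      rw [e2]
      ring
    have c1 : R (m + N) = R (N + m) := by rw [Nat.add_comm]
    have c2 : R (2*m + N) = R (N + m + m) := by congr 1; omega
    have c3 : R (N + 2*m) = R (N + m + m) := by congr 1; omega
    have c4 : R (2*m) = R (m + m) := by congr 1; omega
    rw [l1, l2, l3, hD, l4, c1, c2]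
    ring
  have hRN : ∑ j ∈ Finset.range m, (fun _ : ℕ => ((m:ℝ) * ((m:ℝ) * (0:ℝ)))) j = 0 := by simp
  -- E tends to 0
  have htendE : Tendsto E atTop (nhds 0) := by
    have hN : Tendsto (fun N : ℕ => ((N:ℝ)) ^ (a - 1)) atTop (nhds 0) := by
      have h := (tendsto_rpow_neg_atTop (show 0 < 1 - a by linarith)).comp
        (tendsto_natCast_atTop_atTop (R := ℝ))
      simpa [Function.comp_def, neg_sub] using h
    have hlow : Tendsto (fun N : ℕ => -((m:ℝ) * ((m:ℝ) * ((N:ℝ)) ^ (a - 1)))) atTop (nhds 0) := by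
      have := ((hN.const_mul (m:ℝ)).const_mul (m:ℝ)).neg
      simpa using this
    refine tendsto_of_tendsto_of_tendsto_of_le_of_le' hlow tendsto_const_nhds ?_ ?_
    · filter_upwards [eventually_ge_atTop 1] with N hN1
      have hterm : ∀ j ∈ Finset.range m,
          -((m:ℝ) * ((N:ℝ)) ^ (a - 1)) ≤ ((N + j : ℕ):ℝ) ^ a - ((N + m + j : ℕ):ℝ) ^ a := by
        intro j _
        have hx1 : (1:ℝ) ≤ ((N + j : ℕ):ℝ) := by
          have : 1 ≤ N + j := by omega
          exact_mod_cast this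
        have hb := aux_bernoulli ha0 ha1.le hx1 (show (0:ℝ) ≤ (m:ℝ) from hmR.le)
        have hcast : ((N + m + j : ℕ):ℝ) = ((N + j : ℕ):ℝ) + (m:ℝ) := by push_cast; ring
        have hmono : ((N + j : ℕ):ℝ) ^ (a - 1) ≤ ((N:ℝ)) ^ (a - 1) := by
          refine Real.rpow_le_rpow_of_nonpos ?_ ?_ (by linarith)
          · exact_mod_cast (by omega : 0 < N)
          · exact_mod_cast (by omega : N ≤ N + j)
        have : ((N + j : ℕ):ℝ) ^ a - ((N + m + j: ℕ):ℝ) ^ a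
            ≥ -((m:ℝ) * ((N + j : ℕ):ℝ) ^ (a - 1)) := by
          rw [hcast]; linarith
        have h2 : (m:ℝ) * ((N + j : ℕ):ℝ) ^ (a - 1) ≤ (m:ℝ) * ((N:ℝ)) ^ (a - 1) :=
          mul_le_mul_of_nonneg_left hmono hmR.le
        linarith
      have := Finset.sum_le_sum hterm
      rw [Finset.sum_const, Finset.card_range, nsmul_eq_mul] at this
      simp only [hE]
      calc -((m:ℝ) * ((m:ℝ) * ((N:ℝ)) ^ (a - 1)))
          = (m:ℝ) * (-((m:ℝ) * ((N:ℝ)) ^ (a - 1))) := by ring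
        _ ≤ _ := this
    · filter_upwards with N
      simp only [hE]
      refine Finset.sum_nonpos fun j _ => ?_
      have : ((N + j : ℕ):ℝ) ^ a ≤ ((N + m + j : ℕ):ℝ) ^ a := by
        refine Real.rpow_le_rpow (by positivity) ?_ ha0.le
        exact_mod_cast (by omega : N + j ≤ N + m + j)
      linarith
  have htsum_t : HasSum t D := by
    refine (hasSum_iff_tendsto_nat_of_nonneg ht_nonneg D).2 ?_
    have : (fun N : ℕ => ∑ k ∈ Finset.range N, t k) = fun N => D + E N := funext hPS
    rw [this]
    simpa using tendsto_const_nhds.add htendE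
  -- the one-sided sequence
  set g : ℕ → ℝ := fun n => fval m H n with hg
  have hg_tail : ∀ k : ℕ, g (k + m) = 1/2 * t k / (m:ℝ) ^ a := by
    intro k
    simp only [hg]
    rw [fval_nat m H (by omega)]
    have c1 : ((k + m : ℕ):ℝ) = (k:ℝ) + m := by push_cast; ring
    rw [c1]
    rw [show (k:ℝ) + m - m = (k:ℝ) by ring, abs_of_nonneg (show (0:ℝ) ≤ (k:ℝ) from k.cast_nonneg),
      show (k:ℝ) + (m:ℝ) + (m:ℝ) = (k:ℝ) + 2*m by ring]
    rw [show ((k:ℝ) + 2*m) ^ a - 2 * ((k:ℝ) + m) ^ a + (k:ℝ) ^ a = -(t k) by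
      simp only [ht]; ring]
    rw [abs_neg, abs_of_nonneg (ht_nonneg k)]
  have hg_tailsum : HasSum (fun k : ℕ => g (k + m)) (1/2 * D / (m:ℝ) ^ a) := by
    have h := (htsum_t.mul_left (1/2)).div_const ((m:ℝ) ^ a)
    have heq : (fun k : ℕ => g (k + m)) = fun k => 1/2 * t k / (m:ℝ) ^ a := funext hg_tail
    rw [heq]
    exact h
  -- value at 0
  have hg0 : g 0 = 1 := by
    simp only [hg]
    rw [fval_nat m H (by omega)]
    rw [show ((0:ℕ):ℝ) = (0:ℝ) by norm_num]
    rw [Real.zero_rpow (by positivity : a ≠ 0)]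
    rw [zero_add, zero_sub, abs_neg, abs_of_nonneg hmR.le]
    rw [show (m:ℝ) ^ a - 2 * 0 + (m:ℝ) ^ a = 2 * (m:ℝ) ^ a by ring]
    rw [abs_of_nonneg (by positivity)]
    field_simp
    rfl
  -- finite part
  set Smid : ℝ := ∑ j ∈ Finset.Icc 1 (m - 1),
      |((j : ℝ) + (m : ℝ)) ^ a - 2 * (j : ℝ) ^ a + |(j : ℝ) - (m : ℝ)| ^ a| with hSm
  have hfin : ∑ i ∈ Finset.range m, g i = 1 + 1/2 * Smid / (m:ℝ) ^ a := by
    have hIcc := sum_Icc_one_eq m (by omega) g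
    have hmid : ∑ j ∈ Finset.Icc 1 (m - 1), g j = 1/2 * Smid / (m:ℝ) ^ a := by
      simp only [hSm, Finset.mul_sum, Finset.sum_div]
      refine Finset.sum_congr rfl fun j _ => ?_
      simp only [hg]
      rw [fval_nat m H (by omega)]
    rw [hg0] at hIcc
    linarith
  have htotal_nat : HasSum g (1/2 * D / (m:ℝ) ^ a + ∑ i ∈ Finset.range m, g i) :=
    (hasSum_nat_add_iff m).1 hg_tailsum
  set SgT : ℝ := 1/2 * D / (m:ℝ) ^ a + ∑ i ∈ Finset.range m, g i with hSgT
  have hneg : HasSum (fun n : ℕ => g (n + 1)) (SgT - g 0) := by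
    refine (hasSum_nat_add_iff 1).2 ?_
    rw [Finset.sum_range_one, sub_add_cancel]
    exact htotal_nat
  have hznegf : (fun n : ℕ => fval m H (-((n:ℤ) + 1))) = fun n : ℕ => g (n + 1) := by
    funext n
    rw [fval_symm]
    simp only [hg]
    congr 1
  have htotal : HasSum (fval m H) (SgT + (SgT - g 0)) := by
    refine HasSum.of_nat_of_neg_add_one htotal_nat ?_
    rw [hznegf]
    exact hneg
  have hval : SgT + (SgT - g 0)
      = 1 + Smid / (m:ℝ) ^ a + ((R (2*m)) - 2 * R m) / (m:ℝ) ^ a := by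
    rw [hSgT, hfin, hg0, hD]
    ring
  rw [hval] at htotal
  exact htotal

lemma key_half (m : ℕ) (hm : 2 ≤ m) : HasSum (fval m (1/2)) (m:ℝ) := by
  have hmR : (0:ℝ) < m := by exact_mod_cast (by omega : 0 < m)
  have h2h : (2 : ℝ) * (1/2) = 1 := by norm_num
  set g : ℕ → ℝ := fun n => fval m (1/2) (n:ℤ) with hgdef
  have hg_eval : ∀ n : ℕ, g n = if n < m then ((m:ℝ) - n)/m else 0 := by
    intro n
    simp only [hgdef]
    rw [fval_nat m (1/2) (by omega : 1 ≤ m)]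
    simp only [h2h, Real.rpow_one]
    by_cases hn : n < m
    · rw [if_pos hn]
      have hnm : (n:ℝ) ≤ (m:ℝ) := by exact_mod_cast hn.le
      rw [show |(n:ℝ) - m| = (m:ℝ) - n from by
        rw [abs_of_nonpos (by linarith)]; ring]
      rw [show (n:ℝ) + m - 2 * n + ((m:ℝ) - n) = 2 * ((m:ℝ) - n) by ring]
      rw [abs_of_nonneg (by linarith)]
      ring
    · rw [if_neg hn]
      push_neg at hn
      have hnm : (m:ℝ) ≤ (n:ℝ) := by exact_mod_cast hn
      rw [show |(n:ℝ) - m| = (n:ℝ) - m from abs_of_nonneg (by linarith)]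
      rw [show (n:ℝ) + m - 2 * n + ((n:ℝ) - m) = 0 by ring]
      simp
  set G : ℝ := ∑ i ∈ Finset.range m, ((m:ℝ) - i)/m with hG
  have hnat : HasSum g G := by
    have h := hasSum_sum_of_ne_finset_zero (L := SummationFilter.unconditional ℕ) (s := Finset.range m)
      (f := g) (by
        intro n hn
        rw [hg_eval n, if_neg (by simpa using hn)])
    have he : ∑ i ∈ Finset.range m, g i = G := by
      refine Finset.sum_congr rfl fun i hi => ?_
      rw [hg_eval i, if_pos (Finset.mem_range.1 hi)]
    rwa [he] at h
  have hGval : G = ((m:ℝ) + 1)/2 := by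
    rw [hG, ← Finset.sum_div, Finset.sum_sub_distrib, Finset.sum_const, Finset.card_range,
      nsmul_eq_mul, aux_gauss]
    field_simp
    ring
  have hg0 : g 0 = 1 := by
    rw [hg_eval 0, if_pos (by omega)]
    rw [Nat.cast_zero, sub_zero, div_self hmR.ne']
  have hneg : HasSum (fun n : ℕ => g (n + 1)) (G - 1) := by
    refine (hasSum_nat_add_iff 1).2 ?_
    rw [Finset.sum_range_one, hg0, sub_add_cancel]
    exact hnat
  have hznegf : (fun n : ℕ => fval m (1/2) (-((n:ℤ) + 1)))
      = fun n : ℕ => g (n + 1) := by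
    funext n
    rw [fval_symm]
    simp only [hgdef]
    congr 1
  have htotal : HasSum (fval m (1/2)) (G + (G - 1)) := by
    refine HasSum.of_nat_of_neg_add_one hnat ?_
    rw [hznegf]
    exact hneg
  have : G + (G - 1) = (m:ℝ) := by rw [hGval]; ring
  rwa [this] at htotal

lemma key_lim (m : ℕ) (hm : 2 ≤ m) :
    Tendsto (fun H : ℝ => 1 + (∑ j ∈ Finset.Icc 1 (m - 1),
        |((j : ℝ) + (m : ℝ)) ^ (2 * H) - 2 * (j : ℝ) ^ (2 * H)
          + |(j : ℝ) - (m : ℝ)| ^ (2 * H)|) / (m : ℝ) ^ (2 * H)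
        + ((∑ j ∈ Finset.range (2 * m), (j : ℝ) ^ (2 * H))
            - 2 * ∑ j ∈ Finset.range m, (j : ℝ) ^ (2 * H)) / (m : ℝ) ^ (2 * H))
      (nhds (1/2)) (nhds (2 * (m:ℝ))) := by
  have hmR : (0:ℝ) < m := by exact_mod_cast (by omega : 0 < m)
  have hden : Tendsto (fun H : ℝ => (m:ℝ) ^ (2 * H)) (nhds (1/2)) (nhds (m:ℝ)) :=
    tendsto_pow_term hmR.le
  have hnum1 : Tendsto (fun H : ℝ => ∑ j ∈ Finset.Icc 1 (m - 1),
      |((j : ℝ) + (m : ℝ)) ^ (2 * H) - 2 * (j : ℝ) ^ (2 * H)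
        + |(j : ℝ) - (m : ℝ)| ^ (2 * H)|) (nhds (1/2))
      (nhds (∑ j ∈ Finset.Icc 1 (m - 1),
        |(j : ℝ) + (m : ℝ) - 2 * (j : ℝ) + abs ((j : ℝ) - (m : ℝ))|)) := by
    refine tendsto_finset_sum _ fun j _ => ?_
    exact (((tendsto_pow_term (by positivity : (0:ℝ) ≤ (j:ℝ) + m)).sub
      ((tendsto_pow_term (show (0:ℝ) ≤ (j:ℝ) from j.cast_nonneg)).const_mul 2)).add
      (tendsto_pow_term (abs_nonneg ((j:ℝ) - m)))).abs
  have hnum2 : Tendsto (fun H : ℝ => (∑ j ∈ Finset.range (2 * m), (j : ℝ) ^ (2 * H))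
      - 2 * ∑ j ∈ Finset.range m, (j : ℝ) ^ (2 * H)) (nhds (1/2))
      (nhds ((∑ j ∈ Finset.range (2 * m), (j : ℝ)) - 2 * ∑ j ∈ Finset.range m, (j : ℝ))) := by
    refine Tendsto.sub ?_ (Tendsto.const_mul 2 ?_) <;>
      exact tendsto_finset_sum _ fun j _ =>
        tendsto_pow_term (show (0:ℝ) ≤ (j:ℝ) from j.cast_nonneg)
  have hval : (1:ℝ) + (∑ j ∈ Finset.Icc 1 (m - 1),
        |(j : ℝ) + (m : ℝ) - 2 * (j : ℝ) + abs ((j : ℝ) - (m : ℝ))|) / (m:ℝ)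
      + ((∑ j ∈ Finset.range (2 * m), (j : ℝ)) - 2 * ∑ j ∈ Finset.range m, (j : ℝ)) / (m:ℝ)
      = 2 * (m:ℝ) := by
    have e1 : ∑ j ∈ Finset.Icc 1 (m - 1),
        |(j : ℝ) + (m : ℝ) - 2 * (j : ℝ) + abs ((j : ℝ) - (m : ℝ))|
        = ∑ j ∈ Finset.Icc 1 (m - 1), (2 * ((m:ℝ) - j)) := by
      refine Finset.sum_congr rfl fun j hj => ?_
      obtain ⟨hj1, hj2⟩ := Finset.mem_Icc.1 hj
      have hjm : (j:ℝ) ≤ (m:ℝ) - 1 := by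
        have : (j:ℕ) ≤ m - 1 := hj2
        have h2 : (j:ℝ) ≤ ((m - 1 : ℕ):ℝ) := by exact_mod_cast this
        rwa [Nat.cast_sub (by omega), Nat.cast_one] at h2
      rw [show |(j:ℝ) - m| = (m:ℝ) - j from by rw [abs_of_nonpos (by linarith)]; ring]
      rw [show (j:ℝ) + m - 2 * j + ((m:ℝ) - j) = 2 * ((m:ℝ) - j) by ring]
      rw [abs_of_nonneg (by linarith)]
    rw [e1, sum_Icc_one_eq m (by omega) (fun j : ℕ => 2 * ((m:ℝ) - j))]
    rw [aux_gauss, aux_gauss]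
    have e2 : ∑ j ∈ Finset.range m, (2 * ((m:ℝ) - j))
        = 2 * ((m:ℝ) * m - (m:ℝ) * ((m:ℝ) - 1) / 2) := by
      rw [← Finset.mul_sum, Finset.sum_sub_distrib, Finset.sum_const, Finset.card_range,
        nsmul_eq_mul, aux_gauss]
    rw [e2]
    push_cast
    field_simp
    ring
  rw [← hval]
  exact (tendsto_const_nhds.add (hnum1.div hden hmR.ne')).add (hnum2.div hden hmR.ne')

/-- ℓ¹-norm of the correlation of the `m`-dilated simple increment filter
`{-1,1}^m`: explicit formula for `H ∈ (0,1/2)`, limit `2m` as `H → (1/2)⁻`,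
value `m` at `H = 1/2`, hence discontinuity at `H = 1/2` for `m ≥ 2`. -/
theorem stmt16 (m : ℕ) (hm : 2 ≤ m)
    (ρ : ℝ → ℤ → ℝ)
    (hρ : ∀ H : ℝ, ∀ j : ℤ, ρ H j =
      (1 / 2) * (|(j : ℝ) + (m : ℝ)| ^ (2 * H) - 2 * |(j : ℝ)| ^ (2 * H)
          + |(j : ℝ) - (m : ℝ)| ^ (2 * H)) / (m : ℝ) ^ (2 * H))
    (S : ℝ → ℕ → ℝ)
    (hS : ∀ H : ℝ, ∀ k : ℕ, S H k = ∑ j ∈ Finset.range (k + 1), (j : ℝ) ^ (2 * H)) :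
    (∀ H ∈ Set.Ioo (0 : ℝ) (1 / 2),
      (∑' j : ℤ, |ρ H j|) =
        1 + (∑ j ∈ Finset.Icc 1 (m - 1),
              |((j : ℝ) + (m : ℝ)) ^ (2 * H) - 2 * (j : ℝ) ^ (2 * H)
                + |(j : ℝ) - (m : ℝ)| ^ (2 * H)|) / (m : ℝ) ^ (2 * H)
          + (S H (2 * m - 1) - 2 * S H (m - 1)) / (m : ℝ) ^ (2 * H)) ∧
    Filter.Tendsto (fun H : ℝ => ∑' j : ℤ, |ρ H j|)
      (nhdsWithin (1 / 2) (Set.Iio (1 / 2))) (nhds (2 * (m : ℝ))) ∧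
    (∑' j : ℤ, |ρ (1 / 2) j|) = (m : ℝ) ∧
    ¬ ContinuousAt (fun H : ℝ => ∑' j : ℤ, |ρ H j|) (1 / 2) := by
  have htc : ∀ H : ℝ, ∑' j : ℤ, |ρ H j| = ∑' j : ℤ, fval m H j := by
    intro H
    refine tsum_congr fun j => ?_
    rw [hρ]
    rfl
  have hmR : (0:ℝ) < m := by exact_mod_cast (by omega : 0 < m)
  have hSrw : ∀ H : ℝ, S H (2 * m - 1) - 2 * S H (m - 1)
      = (∑ j ∈ Finset.range (2 * m), (j : ℝ) ^ (2 * H))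
        - 2 * ∑ j ∈ Finset.range m, (j : ℝ) ^ (2 * H) := by
    intro H
    rw [hS, hS, show 2 * m - 1 + 1 = 2 * m by omega, show m - 1 + 1 = m by omega]
  have part1 : ∀ H ∈ Set.Ioo (0 : ℝ) (1 / 2),
      (∑' j : ℤ, |ρ H j|) =
        1 + (∑ j ∈ Finset.Icc 1 (m - 1),
              |((j : ℝ) + (m : ℝ)) ^ (2 * H) - 2 * (j : ℝ) ^ (2 * H)
                + |(j : ℝ) - (m : ℝ)| ^ (2 * H)|) / (m : ℝ) ^ (2 * H)
          + (S H (2 * m - 1) - 2 * S H (m - 1)) / (m : ℝ) ^ (2 * H) := by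
    intro H hH
    rw [htc H, (key m hm hH.1 hH.2).tsum_eq, hSrw H]
  have part3 : (∑' j : ℤ, |ρ (1/2 : ℝ) j|) = (m : ℝ) := by
    rw [htc (1/2), (key_half m hm).tsum_eq]
  have part2 : Filter.Tendsto (fun H : ℝ => ∑' j : ℤ, |ρ H j|)
      (nhdsWithin (1 / 2) (Set.Iio (1 / 2))) (nhds (2 * (m : ℝ))) := by
    have hmem : Set.Ioo (0:ℝ) (1/2) ∈ nhdsWithin (1/2 : ℝ) (Set.Iio (1/2)) := by
      have h1 : Set.Ioi (0:ℝ) ∈ nhdsWithin (1/2 : ℝ) (Set.Iio (1/2)) :=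
        mem_nhdsWithin_of_mem_nhds (Ioi_mem_nhds (by norm_num))
      have h2 : Set.Iio (1/2 : ℝ) ∈ nhdsWithin (1/2 : ℝ) (Set.Iio (1/2)) :=
        self_mem_nhdsWithin
      have := Filter.inter_mem h1 h2
      rwa [Set.Ioi_inter_Iio] at this
    have hev : (fun H : ℝ => ∑' j : ℤ, |ρ H j|) =ᶠ[nhdsWithin (1/2 : ℝ) (Set.Iio (1/2))]
        (fun H : ℝ => 1 + (∑ j ∈ Finset.Icc 1 (m - 1),
              |((j : ℝ) + (m : ℝ)) ^ (2 * H) - 2 * (j : ℝ) ^ (2 * H)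
                + |(j : ℝ) - (m : ℝ)| ^ (2 * H)|) / (m : ℝ) ^ (2 * H)
          + ((∑ j ∈ Finset.range (2 * m), (j : ℝ) ^ (2 * H))
              - 2 * ∑ j ∈ Finset.range m, (j : ℝ) ^ (2 * H)) / (m : ℝ) ^ (2 * H)) := by
      filter_upwards [hmem] with H hH
      rw [part1 H hH, hSrw H]
    exact Tendsto.congr' hev.symm ((key_lim m hm).mono_left nhdsWithin_le_nhds)
  refine ⟨part1, part2, part3, ?_⟩
  intro hc
  have h3 : Filter.Tendsto (fun H : ℝ => ∑' j : ℤ, |ρ H j|)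
      (nhdsWithin (1/2 : ℝ) (Set.Iio (1/2))) (nhds ((m:ℝ))) := by
    have := hc.tendsto.mono_left (nhdsWithin_le_nhds (s := Set.Iio (1/2 : ℝ)))
    convert this using 2
    exact part3.symm
  have huniq : (m:ℝ) = 2 * (m:ℝ) := tendsto_nhds_unique h3 part2
  have : (2:ℝ) ≤ (m:ℝ) := by exact_mod_cast hm
  linarith
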